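/- Let (Ω, F, μ) be a probability space, x : Ω → ℝ measurable, and let T and w be square-integrable real random variables with T and w independent and E[w] = 0. Let φ : ℝ → ℝ be Borel measurable with φ∘x = T + w μ-almost everywhere, let m = μ[T | 𝔪_x] be the conditional expectation of T given the σ-algebra 𝔪_x generated by x, and suppose φ∘x = ρ·m μ-almost everywhere for some constant ρ. Then ρ·E[T·m] = E[T²]. -/

import Mathlib

open MeasureTheory ProbabilityTheory

/-- Population moment identity behind the AIR adjustment ratio: if `φ ∘ x = T + w` a.e. with
`T ⟂ w`, `E[w] = 0`, `m = E[T | σ(x)]`, and `φ ∘ x = ρ · m` a.e., then `ρ·E[T·m] = E[T²]`. -/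
theorem stmt_3 {Ω : Type*} [MeasurableSpace Ω] (μ : Measure Ω) [IsProbabilityMeasure μ]
    (x : Ω → ℝ) (hx : Measurable x)
    (T w : Ω → ℝ) (hTmeas : Measurable T) (hwmeas : Measurable w)
    (hT2 : MemLp T 2 μ) (hw2 : MemLp w 2 μ)
    (hindep : IndepFun T w μ) (hwmean : ∫ ω, w ω ∂μ = 0)
    (φ : ℝ → ℝ) (hφ : Measurable φ)
    (hmodel : (fun ω => φ (x ω)) =ᵐ[μ] fun ω => T ω + w ω)
    (m : Ω → ℝ) (hm : m = μ[T | MeasurableSpace.comap x Real.measurableSpace])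
    (ρ : ℝ) (hρ : (fun ω => φ (x ω)) =ᵐ[μ] fun ω => ρ * m ω) :
    ρ * ∫ ω, T ω * m ω ∂μ = ∫ ω, (T ω) ^ 2 ∂μ := by
  have h : (fun ω => ρ * m ω) =ᵐ[μ] (fun ω => T ω + w ω) := hρ.symm.trans hmodel
  have hT2' : Integrable (fun ω => T ω * T ω) μ := by
    simpa [sq] using hT2.integrable_sq
  have hTw : Integrable (fun ω => T ω * w ω) μ :=
    hindep.integrable_mul (hT2.integrable one_le_two) (hw2.integrable one_le_two)
  have key : ∫ ω, T ω * (ρ * m ω) ∂μ = ∫ ω, T ω * (T ω + w ω) ∂μ :=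
    integral_congr_ae (h.mono fun ω hω => by simp only at hω ⊢; rw [hω])
  have hTwint : ∫ ω, T ω * w ω ∂μ = 0 := by
    rw [hindep.integral_fun_mul_eq_mul_integral hT2.aestronglyMeasurable hw2.aestronglyMeasurable,
      hwmean, mul_zero]
  calc ρ * ∫ ω, T ω * m ω ∂μ = ∫ ω, T ω * (ρ * m ω) ∂μ := by
        rw [← integral_const_mul]; congr 1; ext ω; ring
    _ = ∫ ω, T ω * (T ω + w ω) ∂μ := key
    _ = ∫ ω, (T ω * T ω + T ω * w ω) ∂μ := by congr 1; ext ω; ring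
    _ = ∫ ω, T ω * T ω ∂μ + ∫ ω, T ω * w ω ∂μ := integral_add hT2' hTw
    _ = ∫ ω, (T ω) ^ 2 ∂μ := by rw [hTwint, add_zero]; congr 1; ext ω; ring
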